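/- For every x ∈ (0,∞), the Mina margin map M(x) = lim_{k→∞} M_{k,k}(x) satisfies M(1/x) = 1/M(x). -/

import Mathlib

/-- `ω(x) = √(8x+1)`. -/
noncomputable def wF (x : ℝ) : ℝ := Real.sqrt (8 * x + 1)

/-- `c(x) = (ω+3)²/16`. -/
noncomputable def cF (x : ℝ) : ℝ := (wF x + 3) ^ 2 / 16

/-- `d(x) = (ω+3)²/(8(ω+1))`. -/
noncomputable def dF (x : ℝ) : ℝ := (wF x + 3) ^ 2 / (8 * (wF x + 1))

/-- `s(x) = (ω−1)²/(4(ω+7))`. -/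
noncomputable def sF (x : ℝ) : ℝ := (wF x - 1) ^ 2 / (4 * (wF x + 7))

/-- `s₋₁(x) = 1/s(1/x)`, the inverse of `s`. -/
noncomputable def sFinv (x : ℝ) : ℝ := 1 / sF (1 / x)

/-- The ℤ-indexed iterates of `s`. -/
noncomputable def sIter (k : ℤ) (x : ℝ) : ℝ :=
  if 0 ≤ k then sF^[k.toNat] x else sFinv^[(-k).toNat] x

/-- `P₀ = 1` and `P_{k+1} − P_k = ∏_{i=0}^{k} (c_i(x) − 1)`. -/
noncomputable def Pfun (x : ℝ) : ℕ → ℝ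
  | 0 => 1
  | k + 1 => Pfun x k + ∏ i ∈ Finset.range (k + 1), (cF (sIter i x) - 1)

/-- `S₀ = 1` and `S_{k+1} − S_k = ∏_{i=0}^{k} (d_i(x) − 1)`. -/
noncomputable def Sfun (x : ℝ) : ℕ → ℝ
  | 0 => 1
  | k + 1 => Sfun x k + ∏ i ∈ Finset.range (k + 1), (dF (sIter i x) - 1)

/-- `Q₁ = 0` and `Q_{k+1} − Q_k = ∏_{i=1}^{k} (c_{−i}(x) − 1)⁻¹` for `k ≥ 1`. -/
noncomputable def Qfun (x : ℝ) : ℕ → ℝ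
  | 0 => 0
  | 1 => 0
  | k + 2 => Qfun x (k + 1) + ∏ i ∈ Finset.range (k + 1), (cF (sIter (-((i : ℤ) + 1)) x) - 1)⁻¹

/-- `T₁ = 0` and `T_{k+1} − T_k = ∏_{i=1}^{k} (d_{−i}(x) − 1)⁻¹` for `k ≥ 1`. -/
noncomputable def Tfun (x : ℝ) : ℕ → ℝ
  | 0 => 0
  | 1 => 0
  | k + 2 => Tfun x (k + 1) + ∏ i ∈ Finset.range (k + 1), (dF (sIter (-((i : ℤ) + 1)) x) - 1)⁻¹

/-- The finite-trail Mina margin map `M_{ℓ,k}(x) = x(S_k + T_ℓ)/(P_k + Q_ℓ)`. -/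
noncomputable def Mfin (l k : ℕ) (x : ℝ) : ℝ :=
  x * (Sfun x k + Tfun x l) / (Pfun x k + Qfun x l)



lemma wF_sq {x : ℝ} (hx : 0 < x) : wF x ^ 2 = 8 * x + 1 :=
  Real.sq_sqrt (by linarith)

lemma one_lt_wF {x : ℝ} (hx : 0 < x) : 1 < wF x := by
  have : (1:ℝ) < 8 * x + 1 := by linarith
  have h := Real.lt_sqrt (x := 1) (y := 8 * x + 1) (by norm_num)
  rw [wF]; rw [h]; nlinarith

lemma sF_pos {x : ℝ} (hx : 0 < x) : 0 < sF x := by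
  have h1 := one_lt_wF hx
  rw [sF]
  exact div_pos (pow_pos (by linarith) 2) (by nlinarith)

lemma sF_le {x : ℝ} (hx : 0 < x) : sF x ≤ x / 4 := by
  have h1 := one_lt_wF hx
  have h2 := wF_sq hx
  rw [sF, div_le_div_iff₀ (by nlinarith) (by norm_num)]
  nlinarith [sq_nonneg (wF x - 1), sq_nonneg (wF x + 1)]

lemma cF_sub_one_pos {x : ℝ} (hx : 0 < x) : 0 < cF x - 1 := by
  have h1 := one_lt_wF hx
  rw [cF]; nlinarith

lemma cF_sub_one_le {x : ℝ} (hx : 0 < x) : cF x - 1 ≤ 4 * x := by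
  have h1 := one_lt_wF hx
  have h2 := wF_sq hx
  rw [cF, sub_le_iff_le_add, div_le_iff₀ (by norm_num : (0:ℝ) < 16)]
  nlinarith

lemma cF_sub_one_ge {x : ℝ} (hx : 0 < x) : x / 2 ≤ cF x - 1 := by
  have h1 := one_lt_wF hx
  have h2 := wF_sq hx
  rw [cF, le_sub_iff_add_le, le_div_iff₀ (by norm_num : (0:ℝ) < 16)]
  nlinarith

lemma dF_sub_one_pos {x : ℝ} (hx : 0 < x) : 0 < dF x - 1 := by
  have h1 := one_lt_wF hx
  rw [dF, lt_sub_iff_add_lt, lt_div_iff₀ (by nlinarith : (0:ℝ) < 8 * (wF x + 1))]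
  nlinarith

lemma dF_sub_one_le {x : ℝ} (hx : 0 < x) : dF x - 1 ≤ 4 * x := by
  have h1 := one_lt_wF hx
  have h2 := wF_sq hx
  rw [dF, sub_le_iff_le_add, div_le_iff₀ (by nlinarith : (0:ℝ) < 8 * (wF x + 1))]
  nlinarith

lemma dF_sub_one_ge_two {x : ℝ} (hx : 45 ≤ x) : 2 ≤ dF x - 1 := by
  have hx0 : 0 < x := by linarith
  have h1 := one_lt_wF hx0
  have h2 := wF_sq hx0
  have h19 : 19 ≤ wF x := by nlinarith
  rw [dF, le_sub_iff_add_le, le_div_iff₀ (by nlinarith : (0:ℝ) < 8 * (wF x + 1))]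
  nlinarith

lemma wF_inv_sF {x : ℝ} (hx : 0 < x) : wF (1 / sF x) = (wF x + 15) / (wF x - 1) := by
  have h1 := one_lt_wF hx
  have h2 := wF_sq hx
  have hs := sF_pos hx
  have h3 : wF x - 1 ≠ 0 := by linarith
  have h7 : wF x + 7 ≠ 0 := by linarith
  have h : 8 * (1 / sF x) + 1 = ((wF x + 15) / (wF x - 1)) ^ 2 := by
    rw [sF]
    field_simp
    ring
  rw [wF, h, Real.sqrt_sq (div_nonneg (by linarith) (by linarith))]

lemma sF_inv_sF {x : ℝ} (hx : 0 < x) : sF (1 / sF x) = 1 / x := by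
  have h1 := one_lt_wF hx
  have h2 := wF_sq hx
  rw [sF, wF_inv_sF hx]
  have h3 : wF x - 1 ≠ 0 := by linarith
  have h1' : wF x + 1 ≠ 0 := by linarith
  have hx' : x ≠ 0 := ne_of_gt hx
  have e1 : (wF x + 15) / (wF x - 1) - 1 = 16 / (wF x - 1) := by
    field_simp; ring
  have e2 : 4 * ((wF x + 15) / (wF x - 1) + 7) = (32 * (wF x + 1)) / (wF x - 1) := by
    field_simp; ring
  rw [e1, e2]
  field_simp
  linear_combination (-32) * h2

lemma cF_inv_sF {x : ℝ} (hx : 0 < x) : cF (1 / sF x) - 1 = (dF x - 1)⁻¹ := by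
  have h1 := one_lt_wF hx
  have h3 : wF x - 1 ≠ 0 := by linarith
  have h1' : wF x + 1 ≠ 0 := by linarith
  refine eq_inv_of_mul_eq_one_right ?_
  rw [cF, wF_inv_sF hx, dF]
  field_simp
  ring

lemma dF_inv_sF {x : ℝ} (hx : 0 < x) : dF (1 / sF x) - 1 = (cF x - 1)⁻¹ := by
  have h1 := one_lt_wF hx
  have h3 : wF x - 1 ≠ 0 := by linarith
  have h1' : wF x + 1 ≠ 0 := by linarith
  have h7 : wF x + 7 ≠ 0 := by linarith
  refine eq_inv_of_mul_eq_one_right ?_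
  rw [dF, wF_inv_sF hx, cF]
  have e1 : (wF x + 15) / (wF x - 1) + 3 = 4 * (wF x + 3) / (wF x - 1) := by
    field_simp; ring
  have e2 : 8 * ((wF x + 15) / (wF x - 1) + 1) = 16 * (wF x + 7) / (wF x - 1) := by
    field_simp; ring
  rw [e1, e2]
  field_simp
  ring


lemma sFinv_pos {x : ℝ} (hx : 0 < x) : 0 < sFinv x := by
  rw [sFinv]; exact one_div_pos.mpr (sF_pos (by positivity))

lemma sFinv_ge {x : ℝ} (hx : 0 < x) : 4 * x ≤ sFinv x := by
  rw [sFinv]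
  have h1 : 0 < (1:ℝ)/x := by positivity
  have h2 := sF_le h1
  have h3 := sF_pos h1
  rw [le_div_iff₀ h3]
  have h4 := mul_le_mul_of_nonneg_left h2 (by positivity : (0:ℝ) ≤ 4*x)
  have hxx : 4 * x * (1/x/4) = 1 := by field_simp
  linarith

lemma sF_sFinv {x : ℝ} (hx : 0 < x) : sF (sFinv x) = x := by
  rw [sFinv, sF_inv_sF (by positivity), one_div_one_div]

lemma iter_sF_pos {x : ℝ} (hx : 0 < x) (n : ℕ) : 0 < sF^[n] x := by
  induction n with
  | zero => simpa using hx
  | succ n ih => rw [Function.iterate_succ_apply']; exact sF_pos ih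

lemma iter_sFinv_pos {x : ℝ} (hx : 0 < x) (n : ℕ) : 0 < sFinv^[n] x := by
  induction n with
  | zero => simpa using hx
  | succ n ih => rw [Function.iterate_succ_apply']; exact sFinv_pos ih

lemma iter_sF_le {x : ℝ} (hx : 0 < x) (n : ℕ) : sF^[n] x ≤ x / 4 ^ n := by
  induction n with
  | zero => simp
  | succ n ih =>
      rw [Function.iterate_succ_apply']
      calc sF (sF^[n] x) ≤ sF^[n] x / 4 := sF_le (iter_sF_pos hx n)
        _ ≤ (x / 4 ^ n) / 4 := by linarith
        _ = x / 4 ^ (n+1) := by rw [pow_succ]; ring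

lemma iter_sFinv_ge {x : ℝ} (hx : 0 < x) (n : ℕ) : 4 ^ n * x ≤ sFinv^[n] x := by
  induction n with
  | zero => simp
  | succ n ih =>
      rw [Function.iterate_succ_apply']
      calc (4:ℝ) ^ (n+1) * x = 4 * (4 ^ n * x) := by ring
        _ ≤ 4 * sFinv^[n] x := by linarith
        _ ≤ sFinv (sFinv^[n] x) := sFinv_ge (iter_sFinv_pos hx n)

lemma iter_sF_one_div {x : ℝ} (hx : 0 < x) (n : ℕ) :
    sF^[n] (1/x) = 1 / sFinv^[n] x := by
  induction n with
  | zero => simp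
  | succ n ih =>
      rw [Function.iterate_succ_apply', ih, Function.iterate_succ_apply']
      have h := sF_sFinv (iter_sFinv_pos hx n)
      have h2 : sFinv (sFinv^[n] x) = 1 / sF (1 / sFinv^[n] x) := rfl
      rw [h2, one_div_one_div]

lemma iter_sFinv_one_div {x : ℝ} (hx : 0 < x) (n : ℕ) :
    sFinv^[n] (1/x) = 1 / sF^[n] x := by
  induction n with
  | zero => simp
  | succ n ih =>
      rw [Function.iterate_succ_apply', ih, Function.iterate_succ_apply']
      rw [sFinv, one_div_one_div]

lemma sIter_coe (n : ℕ) (x : ℝ) : sIter (n : ℤ) x = sF^[n] x := by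
  rw [sIter, if_pos (by omega)]
  have h : ((n:ℤ)).toNat = n := by omega
  rw [h]

lemma sIter_neg_succ (n : ℕ) (x : ℝ) : sIter (-((n:ℤ)+1)) x = sFinv^[n+1] x := by
  rw [sIter, if_neg (by omega)]
  have h : (-(-((n:ℤ)+1))).toNat = n + 1 := by omega
  rw [h]

lemma sIter_coe_pos {x : ℝ} (hx : 0 < x) (n : ℕ) : 0 < sIter (n : ℤ) x := by
  rw [sIter_coe]; exact iter_sF_pos hx n

lemma sIter_neg_pos {x : ℝ} (hx : 0 < x) (n : ℕ) : 0 < sIter (-((n:ℤ)+1)) x := by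
  rw [sIter_neg_succ]; exact iter_sFinv_pos hx (n+1)

lemma cF_one_div {y : ℝ} (hy : 0 < y) : cF (1/y) - 1 = (dF (sFinv y) - 1)⁻¹ := by
  have h := cF_inv_sF (sFinv_pos hy)
  rwa [sF_sFinv hy] at h

lemma dF_one_div {y : ℝ} (hy : 0 < y) : dF (1/y) - 1 = (cF (sFinv y) - 1)⁻¹ := by
  have h := dF_inv_sF (sFinv_pos hy)
  rwa [sF_sFinv hy] at h

lemma termA {x : ℝ} (hx : 0 < x) (i : ℕ) :
    cF (sIter (i : ℤ) (1/x)) - 1 = (dF (sIter (-((i:ℤ)+1)) x) - 1)⁻¹ := by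
  rw [sIter_coe, sIter_neg_succ, iter_sF_one_div hx, Function.iterate_succ_apply']
  exact cF_one_div (iter_sFinv_pos hx i)

lemma termB {x : ℝ} (hx : 0 < x) (i : ℕ) :
    dF (sIter (i : ℤ) (1/x)) - 1 = (cF (sIter (-((i:ℤ)+1)) x) - 1)⁻¹ := by
  rw [sIter_coe, sIter_neg_succ, iter_sF_one_div hx, Function.iterate_succ_apply']
  exact dF_one_div (iter_sFinv_pos hx i)

lemma termC {x : ℝ} (hx : 0 < x) (i : ℕ) :
    (cF (sIter (-((i:ℤ)+1)) (1/x)) - 1)⁻¹ = dF (sIter (i : ℤ) x) - 1 := by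
  rw [sIter_coe, sIter_neg_succ, iter_sFinv_one_div hx, Function.iterate_succ_apply']
  rw [cF_inv_sF (iter_sF_pos hx i), inv_inv]

lemma termD {x : ℝ} (hx : 0 < x) (i : ℕ) :
    (dF (sIter (-((i:ℤ)+1)) (1/x)) - 1)⁻¹ = cF (sIter (i : ℤ) x) - 1 := by
  rw [sIter_coe, sIter_neg_succ, iter_sFinv_one_div hx, Function.iterate_succ_apply']
  rw [dF_inv_sF (iter_sF_pos hx i), inv_inv]






/-! series terms -/
noncomputable def peT (x : ℝ) (j : ℕ) : ℝ := ∏ i ∈ Finset.range (j + 1), (cF (sIter i x) - 1)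
noncomputable def seT (x : ℝ) (j : ℕ) : ℝ := ∏ i ∈ Finset.range (j + 1), (dF (sIter i x) - 1)
noncomputable def qeT (x : ℝ) (j : ℕ) : ℝ :=
  ∏ i ∈ Finset.range (j + 1), (cF (sIter (-((i : ℤ) + 1)) x) - 1)⁻¹
noncomputable def teT (x : ℝ) (j : ℕ) : ℝ :=
  ∏ i ∈ Finset.range (j + 1), (dF (sIter (-((i : ℤ) + 1)) x) - 1)⁻¹

lemma Pfun_eq (x : ℝ) (k : ℕ) : Pfun x k = 1 + ∑ j ∈ Finset.range k, peT x j := by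
  induction k with
  | zero => simp [Pfun]
  | succ k ih => rw [Pfun, ih, Finset.sum_range_succ]; simp only [peT]; ring

lemma Sfun_eq (x : ℝ) (k : ℕ) : Sfun x k = 1 + ∑ j ∈ Finset.range k, seT x j := by
  induction k with
  | zero => simp [Sfun]
  | succ k ih => rw [Sfun, ih, Finset.sum_range_succ]; simp only [seT]; ring

lemma Qfun_eq (x : ℝ) (k : ℕ) : Qfun x (k + 1) = ∑ j ∈ Finset.range k, qeT x j := by
  induction k with
  | zero => simp [Qfun]
  | succ k ih => rw [Qfun, ih, Finset.sum_range_succ]; simp only [qeT]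

lemma Tfun_eq (x : ℝ) (k : ℕ) : Tfun x (k + 1) = ∑ j ∈ Finset.range k, teT x j := by
  induction k with
  | zero => simp [Tfun]
  | succ k ih => rw [Tfun, ih, Finset.sum_range_succ]; simp only [teT]

/-! reciprocal identities for the sums -/
lemma P_recip {x : ℝ} (hx : 0 < x) (k : ℕ) : Pfun (1/x) k = 1 + Tfun x (k + 1) := by
  induction k with
  | zero => simp [Pfun, Tfun]
  | succ k ih =>
      rw [Pfun, ih, Tfun]
      have hprod : ∏ i ∈ Finset.range (k + 1), (cF (sIter (i : ℤ) (1/x)) - 1)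
          = ∏ i ∈ Finset.range (k + 1), (dF (sIter (-((i : ℤ) + 1)) x) - 1)⁻¹ :=
        Finset.prod_congr rfl fun i _ => termA hx i
      rw [hprod]; ring

lemma S_recip {x : ℝ} (hx : 0 < x) (k : ℕ) : Sfun (1/x) k = 1 + Qfun x (k + 1) := by
  induction k with
  | zero => simp [Sfun, Qfun]
  | succ k ih =>
      rw [Sfun, ih, Qfun]
      have hprod : ∏ i ∈ Finset.range (k + 1), (dF (sIter (i : ℤ) (1/x)) - 1)
          = ∏ i ∈ Finset.range (k + 1), (cF (sIter (-((i : ℤ) + 1)) x) - 1)⁻¹ :=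
        Finset.prod_congr rfl fun i _ => termB hx i
      rw [hprod]; ring

lemma Q_recip {x : ℝ} (hx : 0 < x) (k : ℕ) : Qfun (1/x) (k + 1) = Sfun x k - 1 := by
  induction k with
  | zero => simp [Sfun, Qfun]
  | succ k ih =>
      rw [Qfun, ih, Sfun]
      have : ∏ i ∈ Finset.range (k + 1), (cF (sIter (-((i : ℤ) + 1)) (1/x)) - 1)⁻¹
          = ∏ i ∈ Finset.range (k + 1), (dF (sIter (i : ℤ) x) - 1) :=
        Finset.prod_congr rfl fun i _ => termC hx i
      rw [this]; ring

lemma T_recip {x : ℝ} (hx : 0 < x) (k : ℕ) : Tfun (1/x) (k + 1) = Pfun x k - 1 := by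
  induction k with
  | zero => simp [Pfun, Tfun]
  | succ k ih =>
      rw [Tfun, ih, Pfun]
      have : ∏ i ∈ Finset.range (k + 1), (dF (sIter (-((i : ℤ) + 1)) (1/x)) - 1)⁻¹
          = ∏ i ∈ Finset.range (k + 1), (cF (sIter (i : ℤ) x) - 1) :=
        Finset.prod_congr rfl fun i _ => termD hx i
      rw [this]; ring

lemma peT_nonneg {x : ℝ} (hx : 0 < x) (j : ℕ) : 0 ≤ peT x j :=
  Finset.prod_nonneg fun i _ => le_of_lt (cF_sub_one_pos (sIter_coe_pos hx i))

lemma seT_nonneg {x : ℝ} (hx : 0 < x) (j : ℕ) : 0 ≤ seT x j :=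
  Finset.prod_nonneg fun i _ => le_of_lt (dF_sub_one_pos (sIter_coe_pos hx i))

lemma qeT_nonneg {x : ℝ} (hx : 0 < x) (j : ℕ) : 0 ≤ qeT x j :=
  Finset.prod_nonneg fun i _ => inv_nonneg.mpr (le_of_lt (cF_sub_one_pos (sIter_neg_pos hx i)))

lemma teT_nonneg {x : ℝ} (hx : 0 < x) (j : ℕ) : 0 ≤ teT x j :=
  Finset.prod_nonneg fun i _ => inv_nonneg.mpr (le_of_lt (dF_sub_one_pos (sIter_neg_pos hx i)))

lemma fwd_small {x : ℝ} (hx : 0 < x) :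
    ∀ᶠ j : ℕ in Filter.atTop, 4 * sIter ((j+1 : ℕ) : ℤ) x ≤ 1/2 := by
  have ht : Filter.Tendsto (fun j : ℕ => x / 4 ^ j) Filter.atTop (nhds 0) :=
    Filter.Tendsto.div_atTop tendsto_const_nhds
      (tendsto_pow_atTop_atTop_of_one_lt (by norm_num : (1:ℝ) < 4))
  filter_upwards [ht.eventually_lt_const (show (0:ℝ) < 1/8 by norm_num)] with j hj
  have h1 : sIter ((j+1 : ℕ) : ℤ) x ≤ x / 4 ^ (j+1) := by
    rw [sIter_coe]; exact iter_sF_le hx (j+1)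
  have h2 : x / 4 ^ (j+1) ≤ x / 4 ^ j := by
    gcongr <;> norm_num
  linarith

lemma bwd_big {x : ℝ} (hx : 0 < x) :
    ∀ᶠ j : ℕ in Filter.atTop, (45:ℝ) ≤ sIter (-(((j+1 : ℕ) : ℤ) + 1)) x := by
  have ht : Filter.Tendsto (fun j : ℕ => (4:ℝ) ^ j * x) Filter.atTop Filter.atTop :=
    Filter.Tendsto.atTop_mul_const hx
      (tendsto_pow_atTop_atTop_of_one_lt (by norm_num : (1:ℝ) < 4))
  filter_upwards [ht.eventually_ge_atTop 45] with j hj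
  have h1 : (4:ℝ) ^ (j+2) * x ≤ sIter (-(((j+1 : ℕ) : ℤ) + 1)) x := by
    have : (-(((j+1 : ℕ) : ℤ) + 1)) = (-(((j+1 : ℕ):ℤ) + 1)) := rfl
    rw [show ((((j+1 : ℕ) : ℤ)) + 1) = (((j+1:ℕ)):ℤ) + 1 from rfl]
    rw [sIter_neg_succ (j+1)]
    exact iter_sFinv_ge hx (j+2)
  have h2 : (4:ℝ) ^ j * x ≤ 4 ^ (j+2) * x := by
    have : (4:ℝ) ^ j ≤ 4 ^ (j+2) := by gcongr <;> norm_num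
    nlinarith
  linarith

lemma summable_peT {x : ℝ} (hx : 0 < x) : Summable (peT x) := by
  apply summable_of_ratio_norm_eventually_le (show (1:ℝ)/2 < 1 by norm_num)
  filter_upwards [fwd_small hx] with j hj
  rw [Real.norm_of_nonneg (peT_nonneg hx _), Real.norm_of_nonneg (peT_nonneg hx _)]
  have he : peT x (j+1) = peT x j * (cF (sIter ((j+1 : ℕ) : ℤ) x) - 1) := by
    rw [peT, peT, Finset.prod_range_succ]
  rw [he]
  have hb : cF (sIter ((j+1 : ℕ) : ℤ) x) - 1 ≤ 1/2 := by
    have := cF_sub_one_le (sIter_coe_pos hx (j+1))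
    linarith
  have := mul_le_mul_of_nonneg_left hb (peT_nonneg hx j)
  linarith

lemma summable_seT {x : ℝ} (hx : 0 < x) : Summable (seT x) := by
  apply summable_of_ratio_norm_eventually_le (show (1:ℝ)/2 < 1 by norm_num)
  filter_upwards [fwd_small hx] with j hj
  rw [Real.norm_of_nonneg (seT_nonneg hx _), Real.norm_of_nonneg (seT_nonneg hx _)]
  have he : seT x (j+1) = seT x j * (dF (sIter ((j+1 : ℕ) : ℤ) x) - 1) := by
    rw [seT, seT, Finset.prod_range_succ]
  rw [he]
  have hb : dF (sIter ((j+1 : ℕ) : ℤ) x) - 1 ≤ 1/2 := by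
    have := dF_sub_one_le (sIter_coe_pos hx (j+1))
    linarith
  have := mul_le_mul_of_nonneg_left hb (seT_nonneg hx j)
  linarith

lemma summable_qeT {x : ℝ} (hx : 0 < x) : Summable (qeT x) := by
  apply summable_of_ratio_norm_eventually_le (show (1:ℝ)/2 < 1 by norm_num)
  filter_upwards [bwd_big hx] with j hj
  rw [Real.norm_of_nonneg (qeT_nonneg hx _), Real.norm_of_nonneg (qeT_nonneg hx _)]
  have he : qeT x (j+1) = qeT x j * (cF (sIter (-(((j+1 : ℕ) : ℤ) + 1)) x) - 1)⁻¹ := by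
    rw [qeT, qeT, Finset.prod_range_succ]
  rw [he]
  have hp : 0 < sIter (-(((j+1 : ℕ) : ℤ) + 1)) x := sIter_neg_pos hx (j+1)
  have hb2 : (2:ℝ) ≤ cF (sIter (-(((j+1 : ℕ) : ℤ) + 1)) x) - 1 := by
    have := cF_sub_one_ge hp
    linarith
  have hb : (cF (sIter (-(((j+1 : ℕ) : ℤ) + 1)) x) - 1)⁻¹ ≤ 1/2 := by
    have h := inv_anti₀ (show (0:ℝ) < 2 by norm_num) hb2
    simpa using h
  have := mul_le_mul_of_nonneg_left hb (qeT_nonneg hx j)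
  linarith

lemma summable_teT {x : ℝ} (hx : 0 < x) : Summable (teT x) := by
  apply summable_of_ratio_norm_eventually_le (show (1:ℝ)/2 < 1 by norm_num)
  filter_upwards [bwd_big hx] with j hj
  rw [Real.norm_of_nonneg (teT_nonneg hx _), Real.norm_of_nonneg (teT_nonneg hx _)]
  have he : teT x (j+1) = teT x j * (dF (sIter (-(((j+1 : ℕ) : ℤ) + 1)) x) - 1)⁻¹ := by
    rw [teT, teT, Finset.prod_range_succ]
  rw [he]
  have hb2 : (2:ℝ) ≤ dF (sIter (-(((j+1 : ℕ) : ℤ) + 1)) x) - 1 := dF_sub_one_ge_two hj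
  have hb : (dF (sIter (-(((j+1 : ℕ) : ℤ) + 1)) x) - 1)⁻¹ ≤ 1/2 := by
    have h := inv_anti₀ (show (0:ℝ) < 2 by norm_num) hb2
    simpa using h
  have := mul_le_mul_of_nonneg_left hb (teT_nonneg hx j)
  linarith

open Filter

lemma tendsto_Pfun {x : ℝ} (hx : 0 < x) :
    Tendsto (fun k => Pfun x k) atTop (nhds (1 + ∑' j, peT x j)) := by
  have h := (summable_peT hx).hasSum.tendsto_sum_nat
  exact (tendsto_const_nhds.add h).congr fun k => (Pfun_eq x k).symm

lemma tendsto_Sfun {x : ℝ} (hx : 0 < x) :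
    Tendsto (fun k => Sfun x k) atTop (nhds (1 + ∑' j, seT x j)) := by
  have h := (summable_seT hx).hasSum.tendsto_sum_nat
  exact (tendsto_const_nhds.add h).congr fun k => (Sfun_eq x k).symm

lemma tendsto_Qfun {x : ℝ} (hx : 0 < x) :
    Tendsto (fun k => Qfun x k) atTop (nhds (∑' j, qeT x j)) := by
  have h := (summable_qeT hx).hasSum.tendsto_sum_nat
  have h2 : Tendsto (fun k => Qfun x (k + 1)) atTop (nhds (∑' j, qeT x j)) :=
    h.congr fun k => (Qfun_eq x k).symm
  exact (tendsto_add_atTop_iff_nat 1).mp h2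

lemma tendsto_Tfun {x : ℝ} (hx : 0 < x) :
    Tendsto (fun k => Tfun x k) atTop (nhds (∑' j, teT x j)) := by
  have h := (summable_teT hx).hasSum.tendsto_sum_nat
  have h2 : Tendsto (fun k => Tfun x (k + 1)) atTop (nhds (∑' j, teT x j)) :=
    h.congr fun k => (Tfun_eq x k).symm
  exact (tendsto_add_atTop_iff_nat 1).mp h2

/-- The Mina margin map satisfies `M(1/x) = 1/M(x)`: for every `x > 0` there is a
positive real `L` with `M_{k,k}(x) → L` and `M_{k,k}(1/x) → L⁻¹` as `k → ∞`. -/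
theorem mina_margin_reciprocal (x : ℝ) (hx : 0 < x) :
    ∃ L : ℝ, 0 < L ∧
      Filter.Tendsto (fun k : ℕ => Mfin k k x) Filter.atTop (nhds L) ∧
      Filter.Tendsto (fun k : ℕ => Mfin k k (1 / x)) Filter.atTop (nhds L⁻¹) := by
  set A := 1 + ∑' j, peT x j with hA_def
  set B := 1 + ∑' j, seT x j with hB_def
  set C := ∑' j, qeT x j with hC_def
  set D := ∑' j, teT x j with hD_def
  have hA : 1 ≤ A := le_add_of_nonneg_right (tsum_nonneg (peT_nonneg hx))
  have hB : 1 ≤ B := le_add_of_nonneg_right (tsum_nonneg (seT_nonneg hx))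
  have hC : 0 ≤ C := tsum_nonneg (qeT_nonneg hx)
  have hD : 0 ≤ D := tsum_nonneg (teT_nonneg hx)
  have hden : 0 < A + C := by linarith
  have hnum : 0 < x * (B + D) := by nlinarith
  set L := x * (B + D) / (A + C) with hL_def
  have hL : 0 < L := div_pos hnum hden
  have hnum_t : Tendsto (fun k : ℕ => x * (Sfun x k + Tfun x k)) atTop (nhds (x * (B + D))) :=
    tendsto_const_nhds.mul ((tendsto_Sfun hx).add (tendsto_Tfun hx))
  have hden_t : Tendsto (fun k : ℕ => Pfun x k + Qfun x k) atTop (nhds (A + C)) :=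
    (tendsto_Pfun hx).add (tendsto_Qfun hx)
  have hM1 : Tendsto (fun k : ℕ => Mfin k k x) atTop (nhds L) := by
    have := hnum_t.div hden_t (ne_of_gt hden)
    exact this.congr fun k => rfl
  -- the shifted sequence
  have hS' : Tendsto (fun k : ℕ => Sfun x (k - 1)) atTop (nhds B) :=
    (tendsto_Sfun hx).comp (tendsto_sub_atTop_nat 1)
  have hP' : Tendsto (fun k : ℕ => Pfun x (k - 1)) atTop (nhds A) :=
    (tendsto_Pfun hx).comp (tendsto_sub_atTop_nat 1)
  have hT' : Tendsto (fun k : ℕ => Tfun x (k + 1)) atTop (nhds D) :=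
    (tendsto_add_atTop_iff_nat 1).mpr (tendsto_Tfun hx)
  have hQ' : Tendsto (fun k : ℕ => Qfun x (k + 1)) atTop (nhds C) :=
    (tendsto_add_atTop_iff_nat 1).mpr (tendsto_Qfun hx)
  have hg : Tendsto (fun k : ℕ => Mfin (k + 1) (k - 1) x) atTop (nhds L) := by
    have hn2 : Tendsto (fun k : ℕ => x * (Sfun x (k - 1) + Tfun x (k + 1))) atTop
        (nhds (x * (B + D))) := tendsto_const_nhds.mul (hS'.add hT')
    have := hn2.div (hP'.add hQ') (ne_of_gt hden)
    exact this.congr fun k => rfl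
  have hMg : ∀ m : ℕ, Mfin (m + 1) (m + 1) (1 / x) = (Mfin (m + 2) m x)⁻¹ := by
    intro m
    rw [Mfin, Mfin, P_recip hx, S_recip hx, Q_recip hx, T_recip hx]
    simp only [div_eq_mul_inv, mul_inv, inv_inv, one_div]
    ring
  refine ⟨L, hL, hM1, ?_⟩
  have hginv : Tendsto (fun k : ℕ => (Mfin (k + 1) (k - 1) x)⁻¹) atTop (nhds L⁻¹) :=
    hg.inv₀ (ne_of_gt hL)
  refine hginv.congr' ?_
  rw [Filter.EventuallyEq, eventually_atTop]
  refine ⟨1, fun k hk => ?_⟩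
  obtain ⟨m, rfl⟩ := Nat.exists_eq_add_of_le hk
  have h1 : 1 + m + 1 = m + 2 := by omega
  have h2 : 1 + m - 1 = m := by omega
  have h3 : 1 + m = m + 1 := by omega
  rw [h1, h2, h3, hMg m]
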